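/- Let d, M, l ≥ 1 be integers, let P : ℤ^d → ℤ^M be any function, and let w, a : ℤ^d → ℂ with w finitely supported. Then ∫_{𝕋^M} |Σ_{n ∈ ℤ^d} w(n) a(n) e^{−2πi P(n)·ξ}|^{2l} dξ ≤ (sup_{t ∈ ℤ^M} Σ_{(n⁽¹⁾,…,n⁽ˡ⁾) ∈ (ℤ^d)^l : P(n⁽¹⁾)+⋯+P(n⁽ˡ⁾) = t} Π_{i=1}^{l} |w(n⁽ⁱ⁾)|²) · (Σ_{n ∈ ℤ^d} |a(n)|²)^l. -/

import Mathlib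

open MeasureTheory
open scoped ENNReal NNReal ComplexConjugate

noncomputable section

private lemma fourier_prod_sum {ι : Type*} (s : Finset ι) (k : ι → ℤ) (x : AddCircle (1:ℝ)) :
    ∏ j ∈ s, fourier (k j) x = fourier (∑ j ∈ s, k j) x := by
  induction s using Finset.cons_induction with
  | empty => simp
  | cons a s ha ih => rw [Finset.prod_cons, Finset.sum_cons, fourier_add, ih]

private lemma integral_fourier_single (n : ℤ) :
    (∫ x : AddCircle (1:ℝ), fourier n x) = if n = 0 then 1 else 0 := by
  haveI : Fact (0 < (1:ℝ)) := ⟨one_pos⟩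
  haveI : IsProbabilityMeasure (volume : Measure (AddCircle (1:ℝ))) := ⟨by simp⟩
  split_ifs with h
  · subst h
    simp [fourier_zero]
  · exact integral_eq_zero_of_add_right_eq_neg
      (fun x => fourier_add_half_inv_index h one_pos x)

private lemma integral_prod_fourier {M : ℕ} (k : Fin M → ℤ) :
    (∫ ξ : Fin M → AddCircle (1:ℝ), ∏ i, fourier (k i) (ξ i))
      = if k = 0 then 1 else 0 := by
  haveI : Fact (0 < (1:ℝ)) := ⟨one_pos⟩
  rw [MeasureTheory.volume_pi, MeasureTheory.integral_fintype_prod_eq_prod (fun i x => fourier (k i) x)]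
  by_cases h : k = 0
  · subst h
    simp [integral_fourier_single, Measure.real, AddCircle.measure_univ]
  · obtain ⟨i, hi⟩ := Function.ne_iff.mp h
    rw [if_neg h]
    refine Finset.prod_eq_zero (Finset.mem_univ i) ?_
    rw [integral_fourier_single, if_neg (by simpa using hi)]

private lemma integrable_of_continuous {M : ℕ} {E : Type*} [NormedAddCommGroup E]
    {f : (Fin M → AddCircle (1:ℝ)) → E} (hf : Continuous f) :
    Integrable f (volume : Measure (Fin M → AddCircle (1:ℝ))) := by
  haveI : Fact (0 < (1:ℝ)) := ⟨one_pos⟩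
  haveI : IsProbabilityMeasure (volume : Measure (AddCircle (1:ℝ))) := ⟨by simp⟩
  exact hf.integrable_of_hasCompactSupport
    (IsClosed.isCompact (isClosed_tsupport _))

set_option maxHeartbeats 1000000 in
/-- the even moment method.  For any `P : ℤ^d → ℤ^M`, any finitely
supported weight `w` and any `a : ℤ^d → ℂ`,
`∫_{𝕋^M} |Σ_n w(n) a(n) e^{-2πi P(n)·ξ}|^{2l} dξ
  ≤ (sup_t Σ_{P(n⁽¹⁾)+⋯+P(n⁽ˡ⁾)=t} Π |w(n⁽ⁱ⁾)|²) · (Σ |a(n)|²)^l`. -/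
theorem even_moment_method
    (d M l : ℕ) (hd : 1 ≤ d) (hM : 1 ≤ M) (hl : 1 ≤ l)
    (P : (Fin d → ℤ) → (Fin M → ℤ))
    (w a : (Fin d → ℤ) → ℂ)
    (hw : (Function.support w).Finite) :
    (∫⁻ ξ : Fin M → AddCircle (1 : ℝ),
        (‖∑' n : Fin d → ℤ, w n * a n * ∏ i, fourier (-(P n i)) (ξ i)‖₊ : ℝ≥0∞) ^ (2 * l))
      ≤
    (⨆ t : Fin M → ℤ, ∑' ntup : Fin l → Fin d → ℤ,
        if (∑ j, P (ntup j)) = t then ∏ j, (‖w (ntup j)‖₊ : ℝ≥0∞) ^ 2 else 0) *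
      (∑' n : Fin d → ℤ, (‖a n‖₊ : ℝ≥0∞) ^ 2) ^ l := by
  classical
  haveI : Fact (0 < (1:ℝ)) := ⟨one_pos⟩
  haveI : IsProbabilityMeasure (volume : Measure (AddCircle (1:ℝ))) := ⟨by simp⟩
  set s : Finset (Fin d → ℤ) := hw.toFinset with hs
  set T : Finset (Fin l → Fin d → ℤ) := Fintype.piFinset (fun _ => s) with hT
  set Q : (Fin l → Fin d → ℤ) → (Fin M → ℤ) := fun p => ∑ j, P (p j) with hQ
  set c : (Fin l → Fin d → ℤ) → ℂ := fun p => ∏ j, (w (p j) * a (p j)) with hc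
  set G : (Fin M → AddCircle (1:ℝ)) → ℂ :=
    fun ξ => ∑ p ∈ T, c p * ∏ i, fourier (-(Q p i)) (ξ i) with hG
  set B : Finset (Fin M → ℤ) := T.image Q with hB
  set σ : (Fin M → ℤ) → ℂ := fun t => ∑ p ∈ T.filter (fun p => Q p = t), c p with hσ
  clear_value s T Q c G B σ
  -- continuity of G
  have hGcont : Continuous G := by
    rw [hG]
    refine continuous_finset_sum _ fun p _ => Continuous.mul continuous_const ?_
    exact continuous_finset_prod _ fun i _ =>
      ((fourier (-(Q p i))).continuous).comp (continuous_apply i)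
  -- pointwise identity: F ξ ^ l = G ξ
  have key : ∀ ξ : Fin M → AddCircle (1:ℝ),
      (∑' n : Fin d → ℤ, w n * a n * ∏ i, fourier (-(P n i)) (ξ i)) ^ l = G ξ := by
    intro ξ
    have h1 : (∑' n : Fin d → ℤ, w n * a n * ∏ i, fourier (-(P n i)) (ξ i))
        = ∑ n ∈ s, w n * a n * ∏ i, fourier (-(P n i)) (ξ i) := by
      refine tsum_eq_sum fun n hn => ?_
      have hwn : w n = 0 := by
        by_contra h
        exact hn (by rw [hs]; exact hw.mem_toFinset.mpr h)
      simp [hwn]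
    rw [h1]
    have h2 : (∑ n ∈ s, w n * a n * ∏ i, fourier (-(P n i)) (ξ i)) ^ l
        = ∏ _j : Fin l, (∑ n ∈ s, w n * a n * ∏ i, fourier (-(P n i)) (ξ i)) := by
      rw [Finset.prod_const, Finset.card_univ, Fintype.card_fin]
    rw [h2, Finset.prod_univ_sum, hG, ← hT]
    refine Finset.sum_congr rfl fun p _ => ?_
    rw [Finset.prod_mul_distrib]
    congr 1
    · rw [hc]
    rw [Finset.prod_comm]
    refine Finset.prod_congr rfl fun i _ => ?_
    rw [fourier_prod_sum]
    congr 1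
    simp [hQ, Finset.sum_apply]
  -- rewrite LHS as ∫⁻ ‖G‖₊ ^ 2
  have hLHS : (∫⁻ ξ : Fin M → AddCircle (1 : ℝ),
        (‖∑' n : Fin d → ℤ, w n * a n * ∏ i, fourier (-(P n i)) (ξ i)‖₊ : ℝ≥0∞) ^ (2 * l))
      = ∫⁻ ξ : Fin M → AddCircle (1 : ℝ), ((‖G ξ‖₊ : ℝ≥0∞)) ^ 2 := by
    refine lintegral_congr fun ξ => ?_
    rw [← key ξ, nnnorm_pow, ENNReal.coe_pow, ← pow_mul, mul_comm l 2]
  rw [hLHS]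
  -- expansion of G * conj G
  have conjf : ∀ (m : ℤ) (x : AddCircle (1:ℝ)), conj (fourier (-m) x) = fourier m x := by
    intro m x
    rw [fourier_neg, Complex.conj_conj]
  have hexp : ∀ ξ : Fin M → AddCircle (1:ℝ), G ξ * conj (G ξ)
      = ∑ p ∈ T, ∑ q ∈ T, (c p * conj (c q)) *
          ∏ i, fourier (-(Q p i) + Q q i) (ξ i) := by
    intro ξ
    simp only [hG, map_sum]
    rw [Finset.sum_mul_sum]
    refine Finset.sum_congr rfl fun p _ => Finset.sum_congr rfl fun q _ => ?_
    simp only [map_mul]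
    rw [mul_mul_mul_comm]
    congr 1
    rw [map_prod, ← Finset.prod_mul_distrib]
    refine Finset.prod_congr rfl fun i _ => ?_
    rw [conjf, fourier_add]
  -- integrability of each expansion term
  have hintg : ∀ p q : Fin l → Fin d → ℤ,
      Integrable (fun ξ : Fin M → AddCircle (1:ℝ) =>
        (c p * conj (c q)) * ∏ i, fourier (-(Q p i) + Q q i) (ξ i)) := by
    intro p q
    refine integrable_of_continuous (Continuous.mul continuous_const ?_)
    exact continuous_finset_prod _ fun i _ =>
      ((fourier (-(Q p i) + Q q i)).continuous).comp (continuous_apply i)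
  -- the integral of G * conj G
  have hintegral : (∫ ξ : Fin M → AddCircle (1:ℝ), G ξ * conj (G ξ))
      = ∑ t ∈ B, σ t * conj (σ t) := by
    calc (∫ ξ : Fin M → AddCircle (1:ℝ), G ξ * conj (G ξ))
        = ∫ ξ : Fin M → AddCircle (1:ℝ), ∑ p ∈ T, ∑ q ∈ T, (c p * conj (c q)) *
            ∏ i, fourier (-(Q p i) + Q q i) (ξ i) := by
          exact integral_congr_ae (Filter.Eventually.of_forall hexp)
      _ = ∑ p ∈ T, ∑ q ∈ T, (c p * conj (c q)) *
            (∫ ξ : Fin M → AddCircle (1:ℝ), ∏ i, fourier (-(Q p i) + Q q i) (ξ i)) := by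
          rw [integral_finset_sum T (fun p _ => integrable_finset_sum T (fun q _ => hintg p q))]
          refine Finset.sum_congr rfl fun p _ => ?_
          rw [integral_finset_sum T (fun q _ => hintg p q)]
          exact Finset.sum_congr rfl fun q _ => integral_const_mul _ _
      _ = ∑ p ∈ T, ∑ q ∈ T, (if Q p = Q q then c p * conj (c q) else 0) := by
          refine Finset.sum_congr rfl fun p _ => Finset.sum_congr rfl fun q _ => ?_
          rw [integral_prod_fourier]
          have hiff : ((fun i => -(Q p i) + Q q i) = 0) ↔ Q p = Q q := by
            constructor
            · intro h
              funext i
              have := congrFun h i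
              simpa [neg_add_eq_zero] using this
            · intro h
              funext i
              simp [h]
          by_cases hpq : Q p = Q q
          · rw [if_pos (hiff.mpr hpq), if_pos hpq, mul_one]
          · rw [if_neg (fun h => hpq (hiff.mp h)), if_neg hpq, mul_zero]
      _ = ∑ t ∈ B, ∑ p ∈ T.filter (fun p => Q p = t),
            ∑ q ∈ T, (if Q p = Q q then c p * conj (c q) else 0) := by
          rw [hB]
          exact (Finset.sum_fiberwise_of_maps_to
            (fun p hp => Finset.mem_image_of_mem Q hp) _).symm
      _ = ∑ t ∈ B, σ t * conj (σ t) := by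
          refine Finset.sum_congr rfl fun t _ => ?_
          simp only [hσ, map_sum]
          rw [Finset.sum_mul_sum]
          refine Finset.sum_congr rfl fun p hp => ?_
          have hpt : Q p = t := (Finset.mem_filter.mp hp).2
          rw [← Finset.sum_filter]
          refine Finset.sum_congr ?_ fun q _ => rfl
          refine Finset.filter_congr fun q _ => ?_
          rw [hpt]
          exact eq_comm
  -- real-valued Parseval
  have hsq : ∀ z : ℂ, ((‖z‖^2 : ℝ) : ℂ) = z * conj z := by
    intro z
    rw [Complex.mul_conj]
    norm_cast
    rw [Complex.normSq_eq_norm_sq]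
  have hre : (∫ ξ : Fin M → AddCircle (1:ℝ), ‖G ξ‖^2) = ∑ t ∈ B, ‖σ t‖^2 := by
    apply Complex.ofReal_injective
    calc ((∫ ξ : Fin M → AddCircle (1:ℝ), ‖G ξ‖^2 : ℝ) : ℂ)
        = ∫ ξ : Fin M → AddCircle (1:ℝ), ((‖G ξ‖^2 : ℝ) : ℂ) := integral_ofReal.symm
      _ = ∫ ξ : Fin M → AddCircle (1:ℝ), G ξ * conj (G ξ) := by
          exact integral_congr_ae (Filter.Eventually.of_forall fun ξ => hsq (G ξ))
      _ = ∑ t ∈ B, σ t * conj (σ t) := hintegral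
      _ = ∑ t ∈ B, ((‖σ t‖^2 : ℝ) : ℂ) := by
          exact Finset.sum_congr rfl fun t _ => (hsq (σ t)).symm
      _ = ((∑ t ∈ B, ‖σ t‖^2 : ℝ) : ℂ) := by push_cast; ring
  -- the key lintegral identity
  have hfin : (∫⁻ ξ : Fin M → AddCircle (1:ℝ), ((‖G ξ‖₊ : ℝ≥0∞)) ^ 2)
      = ∑ t ∈ B, ((‖σ t‖₊ : ℝ≥0∞)) ^ 2 := by
    calc (∫⁻ ξ : Fin M → AddCircle (1:ℝ), ((‖G ξ‖₊ : ℝ≥0∞)) ^ 2)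
        = ∫⁻ ξ : Fin M → AddCircle (1:ℝ), ENNReal.ofReal (‖G ξ‖^2) := by
          refine lintegral_congr fun ξ => ?_
          rw [← enorm_eq_nnnorm, ← ofReal_norm, ← ENNReal.ofReal_pow (norm_nonneg _)]
      _ = ENNReal.ofReal (∫ ξ : Fin M → AddCircle (1:ℝ), ‖G ξ‖^2) := by
          rw [MeasureTheory.ofReal_integral_eq_lintegral_ofReal
            (integrable_of_continuous (f := fun ξ => ‖G ξ‖^2) (hGcont.norm.pow 2))
            (Filter.Eventually.of_forall fun ξ => sq_nonneg _)]
      _ = ENNReal.ofReal (∑ t ∈ B, ‖σ t‖^2) := by rw [hre]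
      _ = ∑ t ∈ B, ((‖σ t‖₊ : ℝ≥0∞)) ^ 2 := by
          rw [ENNReal.ofReal_sum_of_nonneg (fun t _ => sq_nonneg _)]
          exact Finset.sum_congr rfl fun t _ => by
            rw [ENNReal.ofReal_pow (norm_nonneg _), ofReal_norm, enorm_eq_nnnorm]
  rw [hfin]
  -- Cauchy–Schwarz at each frequency
  have hCS : ∀ t, ((‖σ t‖₊ : ℝ≥0∞)) ^ 2 ≤
      (∑ p ∈ T.filter (fun p => Q p = t), ∏ j, (‖w (p j)‖₊ : ℝ≥0∞) ^ 2) *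
      (∑ p ∈ T.filter (fun p => Q p = t), ∏ j, (‖a (p j)‖₊ : ℝ≥0∞) ^ 2) := by
    intro t
    have h1 : ‖σ t‖₊ ^ 2 ≤
        (∑ p ∈ T.filter (fun p => Q p = t), ∏ j, ‖w (p j)‖₊ ^ 2) *
        (∑ p ∈ T.filter (fun p => Q p = t), ∏ j, ‖a (p j)‖₊ ^ 2) := by
      simp only [hσ]
      calc ‖∑ p ∈ T.filter (fun p => Q p = t), c p‖₊ ^ 2
            ≤ (∑ p ∈ T.filter (fun p => Q p = t), ‖c p‖₊) ^ 2 := by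
            exact pow_le_pow_left₀ zero_le (nnnorm_sum_le _ _) 2
        _ = (∑ p ∈ T.filter (fun p => Q p = t),
              (∏ j, ‖w (p j)‖₊) * (∏ j, ‖a (p j)‖₊)) ^ 2 := by
            congr 1
            refine Finset.sum_congr rfl fun p _ => ?_
            simp only [hc, nnnorm_prod, nnnorm_mul]
            rw [Finset.prod_mul_distrib]
        _ ≤ (∑ p ∈ T.filter (fun p => Q p = t), (∏ j, ‖w (p j)‖₊) ^ 2) *
            (∑ p ∈ T.filter (fun p => Q p = t), (∏ j, ‖a (p j)‖₊) ^ 2) :=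
            Finset.sum_mul_sq_le_sq_mul_sq _ _ _
        _ = _ := by simp_rw [← Finset.prod_pow]
    have h2 := ENNReal.coe_le_coe.mpr h1
    rw [ENNReal.coe_mul] at h2
    have h3 : ((‖σ t‖₊ : ℝ≥0∞)) ^ 2 = ((‖σ t‖₊ ^ 2 : ℝ≥0) : ℝ≥0∞) := by
      push_cast
      rfl
    refine le_trans (le_of_eq h3) (le_trans h2 (le_of_eq ?_))
    push_cast
    rfl
  -- the weight factor is bounded by the sup
  have hWbound : ∀ t, (∑ p ∈ T.filter (fun p => Q p = t), ∏ j, (‖w (p j)‖₊ : ℝ≥0∞) ^ 2)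
      ≤ ⨆ t' : Fin M → ℤ, ∑' ntup : Fin l → Fin d → ℤ,
          if (∑ j, P (ntup j)) = t' then ∏ j, (‖w (ntup j)‖₊ : ℝ≥0∞) ^ 2 else 0 := by
    intro t
    refine le_trans ?_ (le_iSup (fun t' : Fin M → ℤ =>
      ∑' ntup : Fin l → Fin d → ℤ,
        if (∑ j, P (ntup j)) = t' then ∏ j, (‖w (ntup j)‖₊ : ℝ≥0∞) ^ 2 else 0) t)
    calc (∑ p ∈ T.filter (fun p => Q p = t), ∏ j, (‖w (p j)‖₊ : ℝ≥0∞) ^ 2)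
        = ∑ p ∈ T, if (∑ j, P (p j)) = t then ∏ j, (‖w (p j)‖₊ : ℝ≥0∞) ^ 2 else 0 := by
          rw [Finset.sum_filter]
          simp only [hQ]
      _ ≤ _ := ENNReal.sum_le_tsum T
  -- finish
  calc ∑ t ∈ B, ((‖σ t‖₊ : ℝ≥0∞)) ^ 2
      ≤ ∑ t ∈ B, (⨆ t' : Fin M → ℤ, ∑' ntup : Fin l → Fin d → ℤ,
            if (∑ j, P (ntup j)) = t' then ∏ j, (‖w (ntup j)‖₊ : ℝ≥0∞) ^ 2 else 0) *
          (∑ p ∈ T.filter (fun p => Q p = t), ∏ j, (‖a (p j)‖₊ : ℝ≥0∞) ^ 2) := by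
        exact Finset.sum_le_sum fun t _ =>
          le_trans (hCS t) (mul_le_mul' (hWbound t) le_rfl)
    _ = (⨆ t' : Fin M → ℤ, ∑' ntup : Fin l → Fin d → ℤ,
            if (∑ j, P (ntup j)) = t' then ∏ j, (‖w (ntup j)‖₊ : ℝ≥0∞) ^ 2 else 0) *
          ∑ t ∈ B, ∑ p ∈ T.filter (fun p => Q p = t), ∏ j, (‖a (p j)‖₊ : ℝ≥0∞) ^ 2 := by
        rw [Finset.mul_sum]
    _ ≤ _ := by
        refine mul_le_mul' le_rfl ?_
        calc ∑ t ∈ B, ∑ p ∈ T.filter (fun p => Q p = t), ∏ j, (‖a (p j)‖₊ : ℝ≥0∞) ^ 2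
            = ∑ p ∈ T, ∏ j, (‖a (p j)‖₊ : ℝ≥0∞) ^ 2 := by
              rw [hB]
              exact Finset.sum_fiberwise_of_maps_to
                (fun p hp => Finset.mem_image_of_mem Q hp) _
          _ = ∏ _j : Fin l, ∑ n ∈ s, (‖a n‖₊ : ℝ≥0∞) ^ 2 := by
              rw [hT]
              exact (Finset.prod_univ_sum (fun _ : Fin l => s)
                (fun _ n => (‖a n‖₊ : ℝ≥0∞) ^ 2)).symm
          _ = (∑ n ∈ s, (‖a n‖₊ : ℝ≥0∞) ^ 2) ^ l := by
              rw [Finset.prod_const, Finset.card_univ, Fintype.card_fin]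
          _ ≤ (∑' n : Fin d → ℤ, (‖a n‖₊ : ℝ≥0∞) ^ 2) ^ l :=
              pow_le_pow_left' (ENNReal.sum_le_tsum s) l

end
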